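/- Let X be a cocompact Hadamard space whose ideal boundary contains a nontrivial closed symmetric subset, with induced submetry δ : ∂_T X → Δ on the Tits boundary, and let σ̂ ⊂ ∂_T X be a top-dimensional round sphere. If σ ⊂ σ̂ is a singular sphere, then σ is a reflecting sphere for the restricted submetry δ|_{σ̂}. -/

import Mathlib

open Real Set Filter Metric
open scoped ENNReal

noncomputable section

variable {X : Type*} [MetricSpace X]

/-- `γ` restricted to `[a,b]` is a unit-speed geodesic. -/
def IsGeodesicOn (γ : ℝ → X) (a b : ℝ) : Prop :=
  ∀ s ∈ Set.Icc a b, ∀ t ∈ Set.Icc a b, dist (γ s) (γ t) = |s - t|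

/-- A geodesic from `x` to `y` parametrized by arclength on `[0, dist x y]`. -/
def GeodesicBetween (γ : ℝ → X) (x y : X) : Prop :=
  γ 0 = x ∧ γ (dist x y) = y ∧ IsGeodesicOn γ 0 (dist x y)

/-- A complete geodesic (line). -/
def IsGeodesicLine (c : ℝ → X) : Prop := ∀ s t : ℝ, dist (c s) (c t) = |s - t|

/-- A geodesic ray (unit speed, defined on `[0,∞)`). -/
def IsGeodesicRay (c : ℝ → X) : Prop :=
  ∀ s t : ℝ, 0 ≤ s → 0 ≤ t → dist (c s) (c t) = |s - t|

/-- A CAT(0) space: geodesic and satisfying the CN (Bruhat–Tits) comparison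
inequality. -/
class CAT0 (X : Type*) [MetricSpace X] : Prop where
  geodesic : ∀ x y : X, ∃ γ : ℝ → X, GeodesicBetween γ x y
  cn : ∀ x y z m : X, dist y m = dist y z / 2 → dist z m = dist y z / 2 →
    dist x m ^ 2 ≤ (dist x y ^ 2 + dist x z ^ 2) / 2 - dist y z ^ 2 / 4

/-- Geodesic completeness: every nondegenerate geodesic segment extends to a complete
geodesic. -/
def GeodesicallyComplete (X : Type*) [MetricSpace X] : Prop :=
  ∀ (γ : ℝ → X) (x y : X), GeodesicBetween γ x y → x ≠ y →
    ∃ c : ℝ → X, IsGeodesicLine c ∧ ∀ t ∈ Set.Icc (0 : ℝ) (dist x y), c t = γ t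

/-- A *Hadamard space*: a locally compact, complete, geodesically complete CAT(0)
space. -/
def IsHadamard (X : Type*) [MetricSpace X] : Prop :=
  CAT0 X ∧ LocallyCompactSpace X ∧ CompleteSpace X ∧ GeodesicallyComplete X

/-- `X` has cocompact isometry group. -/
def CocompactIsom (X : Type*) [MetricSpace X] : Prop :=
  ∃ K : Set X, IsCompact K ∧ ∀ x : X, ∃ g : X ≃ᵢ X, g x ∈ K

/-- The space of geodesic rays of `X`. -/
def Ray (X : Type*) [MetricSpace X] := {c : ℝ → X // IsGeodesicRay c}

/-- Two rays are asymptotic if they are at bounded distance. -/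
def asymptotic (c c' : Ray X) : Prop :=
  ∃ K : ℝ, ∀ t : ℝ, 0 ≤ t → dist (c.1 t) (c'.1 t) ≤ K

def raySetoid (X : Type*) [MetricSpace X] : Setoid (Ray X) where
  r := asymptotic
  iseqv := by
    constructor
    · exact fun c => ⟨0, fun t _ => by simp⟩
    · rintro c c' ⟨K, hK⟩
      exact ⟨K, fun t ht => by rw [dist_comm]; exact hK t ht⟩
    · rintro c c' c'' ⟨K, hK⟩ ⟨K', hK'⟩
      exact ⟨K + K', fun t ht =>
        (dist_triangle _ (c'.1 t) _).trans (add_le_add (hK t ht) (hK' t ht))⟩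

/-- The ideal boundary `∂_∞ X`: asymptote classes of geodesic rays. -/
def IdealBoundary (X : Type*) [MetricSpace X] : Type _ := Quotient (raySetoid X)

/-- The ideal point determined by a geodesic ray. -/
def rayClass (c : Ray X) : IdealBoundary X := Quotient.mk (raySetoid X) c

/-- The forward ray of a complete geodesic. -/
def linePosRay (c : ℝ → X) (h : IsGeodesicLine c) : Ray X :=
  ⟨c, fun s t _ _ => h s t⟩

/-- The backward ray of a complete geodesic. -/
def lineNegRay (c : ℝ → X) (h : IsGeodesicLine c) : Ray X :=
  ⟨fun t => c (-t), fun s t _ _ => by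
    have := h (-s) (-t)
    rwa [show (-s) - (-t) = t - s by ring, abs_sub_comm] at this⟩

/-- The Tits angle between two ideal points: the limit of comparison angles between
representing rays issuing from a common basepoint. -/
noncomputable def titsAngle (ξ η : IdealBoundary X) : ℝ :=
  sSup {θ : ℝ | ∃ c c' : Ray X, rayClass c = ξ ∧ rayClass c' = η ∧ c.1 0 = c'.1 0 ∧
    Tendsto (fun t : ℝ => 2 * Real.arcsin (dist (c.1 t) (c'.1 t) / (2 * t)))
      atTop (nhds θ)}

/-- The length of a chain of ideal points, measured with the Tits angle. -/
noncomputable def chainLength (f : ℕ → IdealBoundary X) (n : ℕ) : ℝ≥0∞ :=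
  ∑ i ∈ Finset.range n, ENNReal.ofReal (titsAngle (f i) (f (i + 1)))

/-- The Tits metric on the ideal boundary: the intrinsic (length) metric associated to
the Tits angle, via infima over `ε`-fine chains. -/
noncomputable def titsDist (ξ η : IdealBoundary X) : ℝ≥0∞ :=
  ⨆ (ε : ℝ) (_ : 0 < ε), sInf {L : ℝ≥0∞ | ∃ (n : ℕ) (f : ℕ → IdealBoundary X),
    f 0 = ξ ∧ f n = η ∧ (∀ i < n, titsAngle (f i) (f (i + 1)) ≤ ε) ∧
    L = chainLength f n}

/-- Two ideal points are antipodal if their Tits distance is at least `π`. -/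
def AntipodalB (ξ η : IdealBoundary X) : Prop := ENNReal.ofReal π ≤ titsDist ξ η

/-- Two ideal points are visually antipodal if they are the two endpoints of a complete
geodesic in `X`. -/
def VisuallyAntipodal (ξ η : IdealBoundary X) : Prop :=
  ∃ (c : ℝ → X) (h : IsGeodesicLine c),
    rayClass (linePosRay c h) = ξ ∧ rayClass (lineNegRay c h) = η

/-- A subset of the ideal boundary is symmetric if it contains all antipodes of its
points. -/
def SymmetricSet (A : Set (IdealBoundary X)) : Prop :=
  ∀ ξ ∈ A, ∀ η, AntipodalB ξ η → η ∈ A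

/-- A subset of the ideal boundary is symmetric w.r.t. geodesic lines if every complete
geodesic of `X` has both or neither of its ideal endpoints in it. -/
def LineSymmetricSet (A : Set (IdealBoundary X)) : Prop :=
  ∀ (c : ℝ → X) (h : IsGeodesicLine c),
    (rayClass (linePosRay c h) ∈ A ↔ rayClass (lineNegRay c h) ∈ A)

/-- A subset is visually symmetric if it contains all visual antipodes of its points. -/
def VisuallySymmetricSet (A : Set (IdealBoundary X)) : Prop :=
  ∀ ξ ∈ A, ∀ η, VisuallyAntipodal ξ η → η ∈ A

/-- Convergence of a sequence of ideal points in the cone topology: representing rays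
from a common basepoint converge pointwise. -/
def ConeConvB (ξ : ℕ → IdealBoundary X) (η : IdealBoundary X) : Prop :=
  ∃ (c : ℕ → Ray X) (c' : Ray X), (∀ k, rayClass (c k) = ξ k) ∧ rayClass c' = η ∧
    (∀ k, (c k).1 0 = c'.1 0) ∧
    ∀ t : ℝ, 0 ≤ t → Tendsto (fun k => dist ((c k).1 t) (c'.1 t)) atTop (nhds 0)

/-- Sequential closure in the cone topology. -/
def coneClosure (A : Set (IdealBoundary X)) : Set (IdealBoundary X) :=
  A ∪ {η | ∃ ξ : ℕ → IdealBoundary X, (∀ k, ξ k ∈ A) ∧ ConeConvB ξ η}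

/-- Sequential closedness in the cone topology. -/
def ConeClosed (A : Set (IdealBoundary X)) : Prop :=
  ∀ (ξ : ℕ → IdealBoundary X) (η : IdealBoundary X),
    (∀ k, ξ k ∈ A) → ConeConvB ξ η → η ∈ A

/-- A minimal closed symmetric subset of the ideal boundary. -/
def MinimalClosedSymmetric (B : Set (IdealBoundary X)) : Prop :=
  B.Nonempty ∧ ConeClosed B ∧ SymmetricSet B ∧
    ∀ B' ⊆ B, B'.Nonempty → ConeClosed B' → SymmetricSet B' → B' = B

/-- Convergence of a sequence of points of `X` to an ideal point in the cone topology: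
the distances to a basepoint blow up and the geodesics from the basepoint converge
pointwise to a ray representing the ideal point. -/
def ConeConvPt (o : X) (x : ℕ → X) (η : IdealBoundary X) : Prop :=
  Tendsto (fun k => dist o (x k)) atTop atTop ∧
  ∃ (c : Ray X) (g : ℕ → ℝ → X), c.1 0 = o ∧ rayClass c = η ∧
    (∀ k, GeodesicBetween (g k) o (x k)) ∧
    ∀ t : ℝ, 0 ≤ t → Tendsto (fun k => dist (g k t) (c.1 t)) atTop (nhds 0)

/-- The image of a ray under an isometry of `X`. -/
def isomRay (g : X ≃ᵢ X) (c : Ray X) : Ray X :=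
  ⟨fun t => g (c.1 t), fun s t hs ht => by
    rw [g.dist_eq]; exact c.2 s t hs ht⟩

/-- The induced map of an isometry of `X` on the ideal boundary. -/
def isomBoundary (g : X ≃ᵢ X) : IdealBoundary X → IdealBoundary X :=
  Quotient.map' (isomRay g) (by
    rintro c c' ⟨K, hK⟩
    exact ⟨K, fun t ht => by simpa [isomRay, g.dist_eq] using hK t ht⟩)

/-- A submetry from the Tits boundary to a metric space. -/
def IsTitsSubmetry {Δ : Type*} [MetricSpace Δ] (δ : IdealBoundary X → Δ) : Prop :=
  Function.Surjective δ ∧ ∀ (ξ : IdealBoundary X) (r : ℝ), 0 ≤ r →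
    δ '' {η | titsDist ξ η ≤ ENNReal.ofReal r} = Metric.closedBall (δ ξ) r

open scoped RealInnerProductSpace

/-- Spherical (angular) distance between vectors. -/
noncomputable def sd {m : ℕ} (u v : EuclideanSpace ℝ (Fin m)) : ℝ := Real.arccos ⟪u, v⟫

/-- A subset of the Tits boundary is a round `k`-sphere if it admits a distance chart
onto the unit sphere `S^k ⊂ ℝ^{k+1}`. -/
def IsRoundSphereB (S : Set (IdealBoundary X)) (k : ℕ) : Prop :=
  ∃ f : IdealBoundary X → EuclideanSpace ℝ (Fin (k + 1)),
    (∀ p ∈ S, ‖f p‖ = 1) ∧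
    (∀ v : EuclideanSpace ℝ (Fin (k + 1)), ‖v‖ = 1 → ∃ p ∈ S, f p = v) ∧
    Set.InjOn f S ∧
    ∀ p ∈ S, ∀ q ∈ S, titsDist p q = ENNReal.ofReal (sd (f p) (f q))

/-- A round sphere of the Tits boundary is top-dimensional if no round sphere of larger
dimension exists. -/
def IsTopDimSphere (S : Set (IdealBoundary X)) (k : ℕ) : Prop :=
  IsRoundSphereB S k ∧ ∀ (S' : Set (IdealBoundary X)) (m : ℕ), IsRoundSphereB S' m → m ≤ k

/-- A subset `H` of the Tits boundary is a round `k`-hemisphere with boundary sphere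
`bd` if it admits a distance chart onto a closed hemisphere of `S^k`, carrying `bd`
onto the equator. -/
def IsRoundHemisphereB (H : Set (IdealBoundary X)) (k : ℕ) (bd : Set (IdealBoundary X)) :
    Prop :=
  ∃ f : IdealBoundary X → EuclideanSpace ℝ (Fin (k + 1)),
    (∀ p ∈ H, ‖f p‖ = 1 ∧ 0 ≤ f p (Fin.last k)) ∧
    (∀ v : EuclideanSpace ℝ (Fin (k + 1)), ‖v‖ = 1 → 0 ≤ v (Fin.last k) →
      ∃ p ∈ H, f p = v) ∧
    Set.InjOn f H ∧
    (∀ p ∈ H, ∀ q ∈ H, titsDist p q = ENNReal.ofReal (sd (f p) (f q))) ∧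
    bd = {p ∈ H | f p (Fin.last k) = 0}


/-- `σ` is a *singular sphere* (of dimension `m`) in the round sphere `σ̂ ⊂ ∂_T X`:
there is a round hemisphere `τ⁺ ⊂ ∂_T X` with `∂τ⁺ = σ` and `τ⁺ ∩ σ̂ = σ` such that
`τ⁺ ∪ τ⁻` is a round sphere for every round hemisphere `τ⁻ ⊂ σ̂` with `∂τ⁻ = σ`. -/
def IsSingularSphereIn {X : Type*} [MetricSpace X]
    (σ σhat : Set (IdealBoundary X)) (m : ℕ) : Prop :=
  IsRoundSphereB σ m ∧ σ ⊆ σhat ∧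
    ∃ τp : Set (IdealBoundary X), IsRoundHemisphereB τp (m + 1) σ ∧ τp ∩ σhat = σ ∧
      ∀ τm ⊆ σhat, IsRoundHemisphereB τm (m + 1) σ → IsRoundSphereB (τp ∪ τm) (m + 1)


section AuxReflecting

variable {F : Type*} [NormedAddCommGroup F] [InnerProductSpace ℝ F]

lemma aux_inner_le_one {a b : F} (ha : ‖a‖ = 1) (hb : ‖b‖ = 1) :
    -1 ≤ ⟪a, b⟫ ∧ ⟪a, b⟫ ≤ 1 := by
  have h := abs_real_inner_le_norm a b
  rw [ha, hb, one_mul] at h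
  exact abs_le.mp h

lemma aux_sd_inj {n n' : ℕ} {a b : EuclideanSpace ℝ (Fin n)}
    {a' b' : EuclideanSpace ℝ (Fin n')}
    (ha : ‖a‖ = 1) (hb : ‖b‖ = 1) (ha' : ‖a'‖ = 1) (hb' : ‖b'‖ = 1)
    (h : ENNReal.ofReal (sd a b) = ENNReal.ofReal (sd a' b')) : ⟪a, b⟫ = ⟪a', b'⟫ := by
  have hsd : sd a b = sd a' b' :=
    (ENNReal.ofReal_eq_ofReal_iff (Real.arccos_nonneg _) (Real.arccos_nonneg _)).mp h
  have h1 := aux_inner_le_one ha hb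
  have h2 := aux_inner_le_one ha' hb'
  have := congrArg Real.cos hsd
  rwa [sd, sd, Real.cos_arccos h1.1 h1.2, Real.cos_arccos h2.1 h2.2] at this

lemma aux_eq_neg_of_inner {a b : F} (ha : ‖a‖ = 1) (hb : ‖b‖ = 1)
    (h : ⟪a, b⟫ = -1) : b = -a := by
  have hz : ⟪a + b, a + b⟫ = 0 := by
    rw [real_inner_add_add_self, h, real_inner_self_eq_norm_sq, real_inner_self_eq_norm_sq,
      ha, hb]
    ring
  have := inner_self_eq_zero.mp hz
  linear_combination (norm := abel) this

lemma aux_sd_pi {n : ℕ} {a b : EuclideanSpace ℝ (Fin n)} (ha : ‖a‖ = 1) (hb : ‖b‖ = 1)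
    (h : ENNReal.ofReal (sd a b) = ENNReal.ofReal π) : b = -a := by
  have hsd : sd a b = π :=
    (ENNReal.ofReal_eq_ofReal_iff (Real.arccos_nonneg _) Real.pi_pos.le).mp h
  have h1 := aux_inner_le_one ha hb
  have : ⟪a, b⟫ = -1 := by
    have := Real.arccos_eq_pi.mp hsd
    linarith [h1.1]
  exact aux_eq_neg_of_inner ha hb this

lemma aux_sd_neg_self {n : ℕ} {a : EuclideanSpace ℝ (Fin n)} (ha : ‖a‖ = 1) :
    sd a (-a) = π := by
  rw [sd, inner_neg_right, real_inner_self_eq_norm_sq, ha]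
  norm_num [Real.arccos_neg_one]

lemma aux_sd_neg_right {n : ℕ} (a b : EuclideanSpace ℝ (Fin n)) :
    sd a (-b) = π - sd a b := by
  rw [sd, sd, inner_neg_right, Real.arccos_neg]

lemma aux_inner_sum_orthonormal {n : ℕ} {B : Fin n → F} (hB : Orthonormal ℝ B)
    (c : Fin n → ℝ) (j : Fin n) : ⟪∑ i, c i • B i, B j⟫ = c j := by
  classical
  rw [sum_inner]
  have hite := orthonormal_iff_ite.mp hB
  have : ∀ i, ⟪c i • B i, B j⟫ = if i = j then c i else 0 := by
    intro i
    rw [real_inner_smul_left, hite i j]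
    by_cases hij : i = j <;> simp [hij]
  simp_rw [this]
  simp

lemma aux_expand {n : ℕ} {B : Fin n → F} (hB : Orthonormal ℝ B) {v : F}
    (hv : v ∈ Submodule.span ℝ (Set.range B)) : (∑ j, ⟪v, B j⟫ • B j) = v := by
  obtain ⟨c, rfl⟩ := (Submodule.mem_span_range_iff_exists_fun ℝ).mp hv
  have : ∀ j, ⟪∑ i, c i • B i, B j⟫ = c j := aux_inner_sum_orthonormal hB c
  simp_rw [this]

lemma aux_inner_span {n : ℕ} {B : Fin n → F} (hB : Orthonormal ℝ B) {v : F} (v' : F)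
    (hv : v ∈ Submodule.span ℝ (Set.range B)) :
    ⟪v, v'⟫ = ∑ j, ⟪v, B j⟫ * ⟪v', B j⟫ := by
  conv_lhs => rw [← aux_expand hB hv]
  rw [sum_inner]
  congr 1
  ext j
  rw [real_inner_smul_left, real_inner_comm (B j) v']

lemma aux_norm_one_of_inner_self {G : Type*} [NormedAddCommGroup G] [InnerProductSpace ℝ G]
    {x : F} {y : G} (hx : ⟪x, x⟫ = ⟪y, y⟫) (hy : ‖y‖ = 1) :
    ‖x‖ = 1 := by
  rw [real_inner_self_eq_norm_sq, real_inner_self_eq_norm_sq, hy] at hx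
  nlinarith [norm_nonneg x]

lemma aux_orthonormal_snoc {n : ℕ} {B : Fin n → F} (hB : Orthonormal ℝ B) {w : F}
    (hw : ‖w‖ = 1) (hperp : ∀ i, ⟪w, B i⟫ = 0) : Orthonormal ℝ (Fin.snoc B w) := by
  classical
  rw [orthonormal_iff_ite] at hB ⊢
  intro i j
  refine Fin.lastCases ?_ ?_ i
  · refine Fin.lastCases ?_ ?_ j
    · simp [Fin.snoc_last, real_inner_self_eq_norm_sq, hw]
    · intro j'
      rw [Fin.snoc_last, Fin.snoc_castSucc, hperp j',
        if_neg (by exact fun h => (Fin.castSucc_lt_last j').ne h.symm)]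
  · intro i'
    refine Fin.lastCases ?_ ?_ j
    · rw [Fin.snoc_last, Fin.snoc_castSucc, real_inner_comm, hperp i',
        if_neg (Fin.castSucc_lt_last i').ne]
    · intro j'
      rw [Fin.snoc_castSucc, Fin.snoc_castSucc, hB i' j']
      by_cases h : i' = j' <;> simp [h, Fin.castSucc_inj]

end AuxReflecting

set_option maxHeartbeats 8000000 in
/-- Let `X` be a cocompact Hadamard space whose ideal boundary contains a nontrivial
closed symmetric subset, with induced submetry `δ : ∂_T X → Δ` (whose fibers are the
minimal closed symmetric sets), and let `σ̂ ⊂ ∂_T X` be a top-dimensional round sphere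
with distance chart `f`.  If `σ ⊂ σ̂` is a singular sphere, then `σ` is a reflecting
sphere for `δ|_{σ̂}`: `δ|_{σ̂}` is invariant under the reflection of `σ̂` along every
hypersphere of `σ̂` containing `σ`. -/
theorem singular_sphere_is_reflecting
    {X : Type*} [MetricSpace X] [CAT0 X] [LocallyCompactSpace X] [CompleteSpace X]
    (hgc : GeodesicallyComplete X) (hcc : CocompactIsom X)
    (hsym : ∃ A : Set (IdealBoundary X), A.Nonempty ∧ A ≠ Set.univ ∧ ConeClosed A ∧
      SymmetricSet A)
    {Δ : Type*} [MetricSpace Δ] (δ : IdealBoundary X → Δ)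
    (hδ : IsTitsSubmetry δ) (hfib : ∀ x : Δ, MinimalClosedSymmetric (δ ⁻¹' {x}))
    (σhat : Set (IdealBoundary X)) (k : ℕ) (htop : IsTopDimSphere σhat k)
    (f : IdealBoundary X → EuclideanSpace ℝ (Fin (k + 1)))
    (hf1 : ∀ p ∈ σhat, ‖f p‖ = 1)
    (hf2 : ∀ v : EuclideanSpace ℝ (Fin (k + 1)), ‖v‖ = 1 → ∃ p ∈ σhat, f p = v)
    (hf3 : Set.InjOn f σhat)
    (hf4 : ∀ p ∈ σhat, ∀ q ∈ σhat, titsDist p q = ENNReal.ofReal (sd (f p) (f q)))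
    (σ : Set (IdealBoundary X)) (m : ℕ) (hsing : IsSingularSphereIn σ σhat m) :
    ∀ W : Submodule ℝ (EuclideanSpace ℝ (Fin (k + 1))), Module.finrank ℝ W = k →
      (∀ p ∈ σ, f p ∈ W) →
      ∀ p ∈ σhat, ∀ q ∈ σhat, f q = (Submodule.reflection W) (f p) → δ q = δ p := by
  classical
  obtain ⟨hσ_sphere, hσ_sub, τp, hτpH, hτp_cap, hτp_all⟩ := hsing
  obtain ⟨h, h1, h2, h3, h4⟩ := hσ_sphere
  -- antipodal points (Tits distance π) have the same δ-image, since fibers are symmetric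
  have hdelta : ∀ a b : IdealBoundary X, titsDist a b = ENNReal.ofReal π → δ b = δ a := by
    intro a b hab
    have hsymm := (hfib (δ a)).2.2.1
    have ha : a ∈ δ ⁻¹' {δ a} := by simp
    have := hsymm a ha b (le_of_eq hab.symm)
    simpa using this
  have hnorm1 : ∀ p ∈ σhat, ⟪f p, f p⟫ = 1 := by
    intro p hp
    rw [real_inner_self_eq_norm_sq, hf1 p hp, one_pow]
  -- choose points of σ carried to the standard basis by the chart h
  have hPex : ∀ i : Fin (m + 1), ∃ p, p ∈ σ ∧ h p = EuclideanSpace.single i 1 :=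
    fun i => h2 _ (by simp)
  choose P hPσ hPh using hPex
  set b : Fin (m + 1) → EuclideanSpace ℝ (Fin (k + 1)) := fun i => f (P i) with hbdef
  -- the two charts induce the same inner products on σ
  have hmatch : ∀ p ∈ σ, ∀ q ∈ σ, ⟪f p, f q⟫ = ⟪h p, h q⟫ := by
    intro p hp q hq
    exact aux_sd_inj (hf1 p (hσ_sub hp)) (hf1 q (hσ_sub hq)) (h1 p hp) (h1 q hq)
      ((hf4 p (hσ_sub hp) q (hσ_sub hq)).symm.trans (h4 p hp q hq))
  have hb : Orthonormal ℝ b := by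
    rw [orthonormal_iff_ite]
    intro i j
    show ⟪f (P i), f (P j)⟫ = _
    rw [hmatch _ (hPσ i) _ (hPσ j), hPh i, hPh j]
    by_cases hij : i = j
    · simp [hij, EuclideanSpace.inner_single_left, EuclideanSpace.single_apply]
    · simp [hij, Ne.symm hij, EuclideanSpace.inner_single_left, EuclideanSpace.single_apply]
  have hcoord : ∀ q ∈ σ, ∀ i, ⟪f q, b i⟫ = h q i := by
    intro q hq i
    show ⟪f q, f (P i)⟫ = _
    rw [hmatch _ hq _ (hPσ i), hPh i]
    simp [EuclideanSpace.inner_single_right]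
  -- expansion of chart images of points of σ in the orthonormal family b
  have hexp : ∀ q ∈ σ, f q = ∑ i, ⟪f q, b i⟫ • b i := by
    intro q hq
    have hsum : (∑ i, ⟪f q, b i⟫ * ⟪f q, b i⟫) = 1 := by
      have hc : ∀ i, ⟪f q, b i⟫ = h q i := hcoord q hq
      simp_rw [hc]
      have h11 : ⟪h q, h q⟫ = 1 := by
        rw [real_inner_self_eq_norm_sq, h1 q hq, one_pow]
      rw [← h11, PiLp.inner_apply]
      simp
      exact Finset.sum_congr rfl fun x _ => (sq _).symm
    have e2 : ⟪f q, ∑ i, ⟪f q, b i⟫ • b i⟫ = 1 := by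
      rw [inner_sum]
      simp_rw [real_inner_smul_right]
      exact hsum
    have e3 : ⟪∑ i, ⟪f q, b i⟫ • b i, ∑ i, ⟪f q, b i⟫ • b i⟫ = 1 := by
      rw [inner_sum]
      simp_rw [real_inner_smul_right, aux_inner_sum_orthonormal hb]
      exact hsum
    have hzero : ⟪f q - ∑ i, ⟪f q, b i⟫ • b i, f q - ∑ i, ⟪f q, b i⟫ • b i⟫ = 0 := by
      rw [real_inner_sub_sub_self, hnorm1 q (hσ_sub hq), e2, e3]
      ring
    have := inner_self_eq_zero.mp hzero
    exact sub_eq_zero.mp this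
  have hspan : ∀ q ∈ σ, f q ∈ Submodule.span ℝ (Set.range b) := by
    intro q hq
    rw [hexp q hq]
    exact Submodule.sum_mem _ fun i _ =>
      Submodule.smul_mem _ _ (Submodule.subset_span ⟨i, rfl⟩)
  -- the unit sphere of the span of b is contained in the chart image of σ
  have hsurjU : ∀ v : EuclideanSpace ℝ (Fin (k + 1)), ‖v‖ = 1 →
      v ∈ Submodule.span ℝ (Set.range b) → ∃ q ∈ σ, f q = v := by
    intro v hv hvs
    set a : EuclideanSpace ℝ (Fin (m + 1)) := WithLp.toLp 2 (fun i => ⟪v, b i⟫) with hadef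
    have hna : ‖a‖ = 1 := by
      refine aux_norm_one_of_inner_self (y := v) ?_ hv
      rw [PiLp.inner_apply, aux_inner_span hb v hvs]
      rfl
    obtain ⟨q, hqσ, hqa⟩ := h2 a hna
    refine ⟨q, hqσ, ?_⟩
    rw [hexp q hqσ]
    have hcoords : ∀ i, ⟪f q, b i⟫ = ⟪v, b i⟫ := by
      intro i
      rw [hcoord q hqσ i, hqa]
    simp_rw [hcoords]
    exact aux_expand hb hvs
  have hUperp : ∀ v ∈ Submodule.span ℝ (Set.range b),
      ∀ x : EuclideanSpace ℝ (Fin (k + 1)), (∀ i, ⟪x, b i⟫ = 0) → ⟪v, x⟫ = 0 := by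
    intro v hv x hx
    rw [aux_inner_span hb x hv]
    simp [hx]
  have hrangeB : ∀ w : EuclideanSpace ℝ (Fin (k + 1)),
      Set.range b ⊆ Set.range (Fin.snoc b w : Fin (m + 2) → _) := by
    rintro w _ ⟨i, rfl⟩
    exact ⟨i.castSucc, by simp⟩
  -- the candidate hemispheres in σhat
  let Tm : EuclideanSpace ℝ (Fin (k + 1)) → Set (IdealBoundary X) := fun w =>
    {x | x ∈ σhat ∧ f x ∈ Submodule.span ℝ (Set.range (Fin.snoc b w : Fin (m + 2) → _)) ∧
      0 ≤ ⟪f x, w⟫}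
  have hσTm : ∀ w : EuclideanSpace ℝ (Fin (k + 1)), (∀ i, ⟪w, b i⟫ = 0) → σ ⊆ Tm w := by
    intro w hwp t ht
    refine ⟨hσ_sub ht, Submodule.span_mono (hrangeB w) (hspan t ht), ?_⟩
    have := hUperp (f t) (hspan t ht) w (fun i => hwp i)
    rw [this]
  have key : ∀ w : EuclideanSpace ℝ (Fin (k + 1)), ‖w‖ = 1 → (∀ i, ⟪w, b i⟫ = 0) →
      IsRoundHemisphereB (Tm w) (m + 1) σ := by
    intro w hw hwp
    set B : Fin (m + 2) → EuclideanSpace ℝ (Fin (k + 1)) := Fin.snoc b w with hBdef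
    have hB : Orthonormal ℝ B := aux_orthonormal_snoc hb hw hwp
    let F : IdealBoundary X → EuclideanSpace ℝ (Fin (m + 2)) := fun x => WithLp.toLp 2 (fun j => ⟪f x, B j⟫)
    refine ⟨F, ?_, ?_, ?_, ?_, ?_⟩
    · rintro x ⟨hx1, hx2, hx3⟩
      constructor
      · refine aux_norm_one_of_inner_self (y := f x) ?_ (hf1 x hx1)
        rw [PiLp.inner_apply, aux_inner_span hB (f x) hx2]
        rfl
      · show (0 : ℝ) ≤ ⟪f x, B (Fin.last (m + 1))⟫
        rw [hBdef, Fin.snoc_last]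
        exact hx3
    · intro v hv hvlast
      have hvmem : (∑ j, v j • B j) ∈ Submodule.span ℝ (Set.range B) :=
        Submodule.sum_mem _ fun j _ =>
          Submodule.smul_mem _ _ (Submodule.subset_span ⟨j, rfl⟩)
      have hvvinner : ∀ j, ⟪∑ j', v j' • B j', B j⟫ = v j := aux_inner_sum_orthonormal hB v
      have hvvnorm : ‖∑ j, v j • B j‖ = 1 := by
        refine aux_norm_one_of_inner_self (y := v) ?_ hv
        rw [aux_inner_span hB _ hvmem, PiLp.inner_apply]
        simp_rw [hvvinner]
        simp [RCLike.inner_apply, conj_trivial]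
        exact Finset.sum_congr rfl fun x _ => (sq _).symm
      obtain ⟨x, hx1, hfx⟩ := hf2 _ hvvnorm
      have hxw : ⟪f x, w⟫ = v (Fin.last (m + 1)) := by
        rw [hfx]
        have := hvvinner (Fin.last (m + 1))
        rwa [hBdef, Fin.snoc_last] at this
      refine ⟨x, ⟨hx1, by rw [hfx]; exact hvmem, by rw [hxw]; exact hvlast⟩, ?_⟩
      ext j
      show ⟪f x, B j⟫ = v j
      rw [hfx]
      exact hvvinner j
    · rintro x ⟨hx1, hx2, _⟩ y ⟨hy1, hy2, _⟩ hxy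
      refine hf3 hx1 hy1 ?_
      rw [← aux_expand hB hx2, ← aux_expand hB hy2]
      refine Finset.sum_congr rfl fun j _ => ?_
      have := congrFun (congrArg WithLp.ofLp hxy) j
      rw [show ⟪f x, B j⟫ = ⟪f y, B j⟫ from this]
    · rintro x ⟨hx1, hx2, _⟩ y ⟨hy1, hy2, _⟩
      rw [hf4 x hx1 y hy1]
      congr 1
      show Real.arccos _ = Real.arccos _
      congr 1
      rw [aux_inner_span hB (f y) hx2, PiLp.inner_apply]
      refine Finset.sum_congr rfl fun j _ => ?_
      simp [F, mul_comm]
    · ext t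
      constructor
      · intro ht
        refine ⟨hσTm w hwp ht, ?_⟩
        show ⟪f t, B (Fin.last (m + 1))⟫ = 0
        rw [hBdef, Fin.snoc_last]
        exact hUperp (f t) (hspan t ht) w hwp
      · rintro ⟨⟨ht1, ht2, _⟩, hlast⟩
        have hlast' : ⟪f t, w⟫ = 0 := by
          have : ⟪f t, B (Fin.last (m + 1))⟫ = 0 := hlast
          rwa [hBdef, Fin.snoc_last] at this
        have hexpt : f t = ∑ j : Fin (m + 2), ⟪f t, B j⟫ • B j := (aux_expand hB ht2).symm
        rw [Fin.sum_univ_castSucc] at hexpt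
        simp only [hBdef, Fin.snoc_castSucc, Fin.snoc_last] at hexpt
        rw [hlast', zero_smul, add_zero] at hexpt
        have htspan : f t ∈ Submodule.span ℝ (Set.range b) := by
          rw [hexpt]
          exact Submodule.sum_mem _ fun i _ =>
            Submodule.smul_mem _ _ (Submodule.subset_span ⟨i, rfl⟩)
        obtain ⟨q, hqσ, hfq⟩ := hsurjU (f t) (hf1 t ht1) htspan
        have : q = t := hf3 (hσ_sub hqσ) ht1 hfq
        rwa [← this]
  -- the main invariance: δ only depends on the component along the span of b
  have main : ∀ u c c' : EuclideanSpace ℝ (Fin (k + 1)),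
      u ∈ Submodule.span ℝ (Set.range b) → (∀ i, ⟪c, b i⟫ = 0) → (∀ i, ⟪c', b i⟫ = 0) →
      ‖c‖ = ‖c'‖ → ∀ p ∈ σhat, ∀ q ∈ σhat, f p = u + c → f q = u + c' → δ q = δ p := by
    intro u c c' hu hc hc' hcc' p hp q hq hfp hfq
    by_cases hs0 : ‖c‖ = 0
    · have hc0 : c = 0 := norm_eq_zero.mp hs0
      have hc'0 : c' = 0 := norm_eq_zero.mp (by rw [← hcc']; exact hs0)
      have : f q = f p := by rw [hfp, hfq, hc0, hc'0]
      rw [hf3 hq hp this]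
    · have hspos : 0 < ‖c‖ := lt_of_le_of_ne (norm_nonneg c) (Ne.symm hs0)
      set s := ‖c‖ with hsdef
      set w := s⁻¹ • c with hwdef
      set w' := s⁻¹ • c' with hw'def
      have hsne : s ≠ 0 := ne_of_gt hspos
      have hw : ‖w‖ = 1 := by
        rw [hwdef, norm_smul, Real.norm_eq_abs, abs_inv, abs_of_pos hspos, ← hsdef,
          inv_mul_cancel₀ hsne]
      have hw' : ‖w'‖ = 1 := by
        rw [hw'def, norm_smul, Real.norm_eq_abs, abs_inv, abs_of_pos hspos, ← hcc',
          inv_mul_cancel₀ hsne]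
      have hwp : ∀ i, ⟪w, b i⟫ = 0 := fun i => by
        rw [hwdef, real_inner_smul_left, hc i, mul_zero]
      have hw'p : ∀ i, ⟪w', b i⟫ = 0 := fun i => by
        rw [hw'def, real_inner_smul_left, hc' i, mul_zero]
      have hcw : c = s • w := by
        rw [hwdef, smul_smul, mul_inv_cancel₀ hsne, one_smul]
      have hc'w : c' = s • w' := by
        rw [hw'def, smul_smul, mul_inv_cancel₀ hsne, one_smul]
      have hww : ⟪w, w⟫ = 1 := by rw [real_inner_self_eq_norm_sq, hw, one_pow]
      have hw'w' : ⟪w', w'⟫ = 1 := by rw [real_inner_self_eq_norm_sq, hw', one_pow]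
      clear_value s w w'
      -- first sphere: τp together with the hemisphere in direction w
      obtain ⟨g, g1, g2, g3, g4⟩ := hτp_all (Tm w) (fun x hx => hx.1) (key w hw hwp)
      have hwspan : w ∈ Submodule.span ℝ (Set.range (Fin.snoc b w : Fin (m + 2) → _)) :=
        Submodule.subset_span ⟨Fin.last (m + 1), by simp⟩
      have hpT : p ∈ Tm w := by
        refine ⟨hp, ?_, ?_⟩
        · rw [hfp, hcw]
          exact Submodule.add_mem _ (Submodule.span_mono (hrangeB w) hu)
            (Submodule.smul_mem _ _ hwspan)
        · rw [hfp, hcw, inner_add_left, real_inner_smul_left, hww,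
            hUperp u hu w hwp]
          positivity
      have hpS : p ∈ τp ∪ Tm w := Or.inr hpT
      have hgp : ‖g p‖ = 1 := g1 p hpS
      obtain ⟨z, hzS, hgz⟩ := g2 (-(g p)) (by rw [norm_neg, hgp])
      have hdzp : titsDist p z = ENNReal.ofReal π := by
        rw [g4 p hpS z hzS, hgz, aux_sd_neg_self hgp]
      have hδz : δ z = δ p := hdelta p z hdzp
      have hfpw : ⟪f p, w⟫ = s := by
        rw [hfp, hcw, inner_add_left, real_inner_smul_left, hww,
          hUperp u hu w hwp]
        ring
      have hzT : z ∉ Tm w := by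
        rintro ⟨hz1, _, hz3⟩
        have hfz : f z = -(f p) :=
          aux_sd_pi (hf1 p hp) (hf1 z hz1)
            (by rw [← hf4 p hp z hz1]; exact hdzp)
        rw [hfz, inner_neg_left, hfpw] at hz3
        linarith
      have hzτp : z ∈ τp := hzS.resolve_right hzT
      have hzσ : z ∉ σ := fun hzm => hzT (hσTm w hwp hzm)
      obtain ⟨F₀, c1, c2, c3, c4, c5⟩ := hτpH
      have hz_last : 0 < F₀ z (Fin.last (m + 1)) := by
        rcases eq_or_lt_of_le (c1 z hzτp).2 with heq | hlt
        · exfalso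
          exact hzσ (by rw [c5]; exact ⟨hzτp, heq.symm⟩)
        · exact hlt
      -- second sphere: τp together with the hemisphere in direction w'
      obtain ⟨g', g1', g2', g3', g4'⟩ := hτp_all (Tm w') (fun x hx => hx.1) (key w' hw' hw'p)
      have hzS' : z ∈ τp ∪ Tm w' := Or.inl hzτp
      obtain ⟨y, hyS', hgy⟩ := g2' (-(g' z)) (by rw [norm_neg]; exact g1' z hzS')
      have hdzy : titsDist z y = ENNReal.ofReal π := by
        rw [g4' z hzS' y hyS', hgy, aux_sd_neg_self (g1' z hzS')]
      have hδy : δ y = δ z := hdelta z y hdzy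
      have hyτp : y ∉ τp := by
        intro hy
        have hFy : F₀ y = -(F₀ z) :=
          aux_sd_pi (c1 z hzτp).1 (c1 y hy).1
            (by rw [← c4 z hzτp y hy]; exact hdzy)
        have h2y := (c1 y hy).2
        rw [hFy] at h2y
        have : (-(F₀ z)) (Fin.last (m + 1)) = -(F₀ z (Fin.last (m + 1))) := rfl
        rw [this] at h2y
        linarith
      have hyT : y ∈ Tm w' := hyS'.resolve_left hyτp
      have hyhat : y ∈ σhat := hyT.1
      -- inner products with the b i agree for y and p
      have hinner : ∀ i, ⟪f y, b i⟫ = ⟪f p, b i⟫ := by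
        intro i
        have htσ : P i ∈ σ := hPσ i
        have htT : P i ∈ Tm w := hσTm w hwp htσ
        have htT' : P i ∈ Tm w' := hσTm w' hw'p htσ
        have htS : P i ∈ τp ∪ Tm w := Or.inr htT
        have htS' : P i ∈ τp ∪ Tm w' := Or.inr htT'
        have hthat : P i ∈ σhat := hσ_sub htσ
        have e34 : sd (g' (P i)) (g' z) = π - sd (g (P i)) (g p) := by
          have lhs_eq : titsDist (P i) z = ENNReal.ofReal (sd (g' (P i)) (g' z)) :=
            g4' (P i) htS' z hzS'
          have rhs_eq : titsDist (P i) z = ENNReal.ofReal (π - sd (g (P i)) (g p)) := by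
            rw [g4 (P i) htS z hzS, hgz, aux_sd_neg_right]
          refine (ENNReal.ofReal_eq_ofReal_iff (Real.arccos_nonneg _) ?_).mp
            (lhs_eq.symm.trans rhs_eq)
          have := Real.arccos_le_pi (⟪g (P i), g p⟫)
          show (0 : ℝ) ≤ π - Real.arccos _
          linarith
        have e56 : titsDist (P i) y = ENNReal.ofReal (sd (g (P i)) (g p)) := by
          rw [g4' (P i) htS' y hyS', hgy, aux_sd_neg_right, e34]
          ring_nf
        have e1 : titsDist (P i) p = ENNReal.ofReal (sd (g (P i)) (g p)) :=
          g4 (P i) htS p hpS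
        have e2 : titsDist (P i) p = ENNReal.ofReal (sd (f (P i)) (f p)) :=
          hf4 (P i) hthat p hp
        have e6 : titsDist (P i) y = ENNReal.ofReal (sd (f (P i)) (f y)) :=
          hf4 (P i) hthat y hyhat
        have hkey : ⟪f (P i), f y⟫ = ⟪f (P i), f p⟫ :=
          aux_sd_inj (hf1 (P i) hthat) (hf1 y hyhat) (hf1 (P i) hthat) (hf1 p hp)
            (e6.symm.trans (e56.trans (e1.symm.trans e2)))
        calc ⟪f y, b i⟫ = ⟪f (P i), f y⟫ := real_inner_comm _ _
          _ = ⟪f (P i), f p⟫ := hkey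
          _ = ⟪f p, b i⟫ := real_inner_comm _ _
      -- compute f y
      have hyspan := hyT.2.1
      have hBon' : Orthonormal ℝ (Fin.snoc b w' : Fin (m + 2) → EuclideanSpace ℝ (Fin (k + 1))) :=
        aux_orthonormal_snoc hb hw' hw'p
      have hfy : f y = u + ⟪f y, w'⟫ • w' := by
        have hexpy := aux_expand hBon' hyspan
        rw [Fin.sum_univ_castSucc] at hexpy
        simp only [Fin.snoc_castSucc, Fin.snoc_last] at hexpy
        conv_lhs => rw [← hexpy]
        congr 1
        calc ∑ i, ⟪f y, b i⟫ • b i = ∑ i, ⟪u, b i⟫ • b i := by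
              refine Finset.sum_congr rfl fun i _ => ?_
              rw [hinner i, hfp, inner_add_left, hc i, add_zero]
          _ = u := aux_expand hb hu
      have hr : (0 : ℝ) ≤ ⟪f y, w'⟫ := hyT.2.2
      have hny : ⟪f y, f y⟫ = ⟪u, u⟫ + ⟪f y, w'⟫ ^ 2 := by
        conv_lhs => rw [hfy]
        rw [real_inner_add_add_self]
        simp only [real_inner_smul_left, real_inner_smul_right, hw'w',
          hUperp u hu w' hw'p]
        ring
      have hnp : ⟪f p, f p⟫ = ⟪u, u⟫ + s ^ 2 := by
        conv_lhs => rw [hfp, hcw]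
        rw [real_inner_add_add_self]
        simp only [real_inner_smul_left, real_inner_smul_right, hww,
          hUperp u hu w hwp]
        ring
      have hrs : ⟪f y, w'⟫ = s := by
        have h1y := hnorm1 y hyhat
        have h1p := hnorm1 p hp
        rw [hny] at h1y
        rw [hnp] at h1p
        nlinarith
      have hfyq : f y = f q := by
        rw [hfy, hrs, hfq, hc'w]
      have hyq : y = q := hf3 hyhat hq hfyq
      rw [← hyq]
      exact hδy.trans hδz
  -- conclude using the reflection
  intro W _ hWσ p hp q hq hfq
  have hbW : ∀ i, b i ∈ W := fun i => hWσ (P i) (hPσ i)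
  have huspan : (∑ i, ⟪f p, b i⟫ • b i) ∈ Submodule.span ℝ (Set.range b) :=
    Submodule.sum_mem _ fun i _ =>
      Submodule.smul_mem _ _ (Submodule.subset_span ⟨i, rfl⟩)
  set u : EuclideanSpace ℝ (Fin (k + 1)) := ∑ i, ⟪f p, b i⟫ • b i with hudef
  have hcperp : ∀ i, ⟪f p - u, b i⟫ = 0 := by
    intro i
    rw [inner_sub_left, hudef, aux_inner_sum_orthonormal hb, sub_self]
  have huW : u ∈ W :=
    Submodule.sum_mem _ fun i _ => Submodule.smul_mem _ _ (hbW i)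
  have hrefl_u : (Submodule.reflection W) u = u := Submodule.reflection_mem_subspace_eq_self huW
  have hc'c : f q - u = (Submodule.reflection W) (f p - u) := by
    rw [map_sub, hrefl_u, hfq]
  have hc'perp : ∀ i, ⟪f q - u, b i⟫ = 0 := by
    intro i
    rw [hc'c]
    calc ⟪(Submodule.reflection W) (f p - u), b i⟫
        = ⟪(Submodule.reflection W) (f p - u), (Submodule.reflection W) (b i)⟫ := by
          rw [Submodule.reflection_mem_subspace_eq_self (hbW i)]
      _ = ⟪f p - u, b i⟫ := LinearIsometryEquiv.inner_map_map _ _ _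
      _ = 0 := hcperp i
  have hnormcc : ‖f p - u‖ = ‖f q - u‖ := by
    rw [hc'c, LinearIsometryEquiv.norm_map]
  exact main u (f p - u) (f q - u) huspan hcperp hc'perp hnormcc p hp q hq
    (by abel) (by abel)
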